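/- Let T be a tree (a connected acyclic simple graph) on a finite nonempty vertex set I, and let (λ_j)_{j∈I} be any family of complex numbers. Then the system of equations in complex variables y_ij, one for each ordered pair (i,j) of adjacent vertices, given by y_ij · y_ji = 1 for every edge {i,j} and ∑_{i adjacent to j} y_ij = λ_j for every vertex j, has at most one solution. -/

import Mathlib

open SimpleGraph

private lemma split_le {I : Type*} [DecidableEq I] {T : SimpleGraph I} {a b : I}
    (w : T.Walk a b) (c : I) (hc : c ∈ w.support) :
    T.dist a c + T.dist c b ≤ w.length := by
  have h1 : T.dist a c ≤ (w.takeUntil c hc).length := SimpleGraph.dist_le _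
  have h2 : T.dist c b ≤ (w.dropUntil c hc).length := SimpleGraph.dist_le _
  have h3 : (w.takeUntil c hc).length + (w.dropUntil c hc).length = w.length := by
    rw [← SimpleGraph.Walk.length_append, SimpleGraph.Walk.take_spec]
  omega

private lemma concat_isPath' {I : Type*} {T : SimpleGraph I} {u v w : I} {p : T.Walk u v}
    (hp : p.IsPath) (h : T.Adj v w) (hw : w ∉ p.support) : (p.concat h).IsPath := by
  rw [SimpleGraph.Walk.isPath_def] at hp ⊢
  rw [SimpleGraph.Walk.support_concat]
  simp [List.concat_eq_append, List.nodup_append, hp, hw]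
  exact fun a ha ha' => hw (ha' ▸ ha)

private lemma tree_dist_dichotomy {I : Type*} [DecidableEq I] {T : SimpleGraph I}
    (htree : T.IsTree) {i j : I} (hij : T.Adj i j) (v : I) :
    T.dist v i + 1 = T.dist v j ∨ T.dist v j + 1 = T.dist v i := by
  have hc := htree.isConnected
  have h1 : T.dist i j = 1 := dist_eq_one_iff_adj (G := T).2 hij
  have h1' : T.dist j i = 1 := by rwa [SimpleGraph.dist_comm]
  have t1 : T.dist v j ≤ T.dist v i + 1 := by
    have := hc.dist_triangle (u := v) (v := i) (w := j); omega
  have t2 : T.dist v i ≤ T.dist v j + 1 := by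
    have := hc.dist_triangle (u := v) (v := j) (w := i); omega
  by_cases h : T.dist v i + 1 = T.dist v j
  · exact Or.inl h
  by_cases h' : T.dist v j + 1 = T.dist v i
  · exact Or.inr h'
  exfalso
  have heq : T.dist v i = T.dist v j := by omega
  obtain ⟨p, hp⟩ := hc.exists_walk_length_eq_dist v i
  obtain ⟨q, hq⟩ := hc.exists_walk_length_eq_dist v j
  have hpp : p.IsPath := p.isPath_of_length_eq_dist hp
  have hqp : q.IsPath := q.isPath_of_length_eq_dist hq
  have hiq : i ∉ q.support := by
    intro hmem
    have := split_le q i hmem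
    omega
  have hQ : (q.concat hij.symm).IsPath := concat_isPath' hqp hij.symm hiq
  have huniq := htree.IsAcyclic.path_unique ⟨p, hpp⟩ ⟨q.concat hij.symm, hQ⟩
  have hw : p = q.concat hij.symm := congrArg Subtype.val huniq
  have := congrArg SimpleGraph.Walk.length hw
  rw [SimpleGraph.Walk.length_concat] at this
  omega

private lemma key_subset {I : Type*} [DecidableEq I] {T : SimpleGraph I} (htree : T.IsTree)
    {i j k : I} (hij : T.Adj i j) (hki : T.Adj k i) (hkj : k ≠ j) (v : I)
    (hv : T.dist v k + 1 = T.dist v i) : T.dist v i + 1 = T.dist v j := by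
  rcases tree_dist_dichotomy htree hij v with h | h
  · exact h
  exfalso
  have hc := htree.isConnected
  obtain ⟨p, hp⟩ := hc.exists_walk_length_eq_dist v k
  obtain ⟨q, hq⟩ := hc.exists_walk_length_eq_dist v j
  have hpp : p.IsPath := p.isPath_of_length_eq_dist hp
  have hqp : q.IsPath := q.isPath_of_length_eq_dist hq
  have hip : i ∉ p.support := by
    intro hmem
    have h2 := split_le p i hmem
    have h3 : T.dist v i ≤ T.dist v i + T.dist i k := Nat.le_add_right _ _
    omega
  have hiq : i ∉ q.support := by
    intro hmem
    have h2 := split_le q i hmem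
    have h4 : T.dist i j = 1 := dist_eq_one_iff_adj (G := T).2 hij
    omega
  have hP : (p.concat hki).IsPath := concat_isPath' hpp hki hip
  have hQ : (q.concat hij.symm).IsPath := concat_isPath' hqp hij.symm hiq
  have huniq := htree.IsAcyclic.path_unique ⟨p.concat hki, hP⟩ ⟨q.concat hij.symm, hQ⟩
  have hw : p.concat hki = q.concat hij.symm := congrArg Subtype.val huniq
  obtain ⟨hv', -⟩ := SimpleGraph.Walk.concat_inj hw
  exact hkj hv'


/-- Let `T` be a tree on a finite nonempty vertex set `I` and let
`(λ_j)_{j ∈ I}` be complex numbers. Then the system `y i j * y j i = 1` for adjacent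
`i, j` and `∑_{i adjacent to j} y i j = λ_j` for every `j` has at most one solution
(in the variables `y i j` for adjacent pairs `(i, j)`). -/
theorem stmt_3 {I : Type*} [Fintype I] [Nonempty I] [DecidableEq I]
    (T : SimpleGraph I) [DecidableRel T.Adj] (htree : T.IsTree)
    (lam : I → ℂ)
    (y y' : I → I → ℂ)
    (hy1 : ∀ i j, T.Adj i j → y i j * y j i = 1)
    (hy2 : ∀ j, ∑ i ∈ Finset.univ.filter (fun i => T.Adj i j), y i j = lam j)
    (hy'1 : ∀ i j, T.Adj i j → y' i j * y' j i = 1)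
    (hy'2 : ∀ j, ∑ i ∈ Finset.univ.filter (fun i => T.Adj i j), y' i j = lam j) :
    ∀ i j, T.Adj i j → y i j = y' i j := by
  have key : ∀ n : ℕ, ∀ i j, T.Adj i j →
      {v | T.dist v j + 1 = T.dist v i}.ncard < n → y i j = y' i j := by
    intro n
    induction n with
    | zero => intro i j _ h; omega
    | succ n ih =>
      intro i j hij hlt
      have hjmem : j ∈ {v | T.dist v j + 1 = T.dist v i} := by
        show T.dist j j + 1 = T.dist j i
        rw [SimpleGraph.dist_self, SimpleGraph.dist_eq_one_iff_adj.2 hij.symm]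
      have hstep : ∀ k, T.Adj k j → k ≠ i → y k j = y' k j := by
        intro k hkj hki
        have hsub : {v | T.dist v k + 1 = T.dist v j} ⊂ {v | T.dist v j + 1 = T.dist v i} := by
          constructor
          · intro v hv
            exact key_subset htree hij.symm hkj hki v hv
          · intro hcon
            have h2 := hcon hjmem
            simp only [Set.mem_setOf_eq, SimpleGraph.dist_self] at h2
            omega
        have hlt2 : {v | T.dist v k + 1 = T.dist v j}.ncard < n := by
          have := Set.ncard_lt_ncard hsub (Set.toFinite _)
          omega
        have hjk := ih j k hkj.symm hlt2
        have h1 := hy1 k j hkj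
        have h1' := hy'1 k j hkj
        rw [eq_inv_of_mul_eq_one_left h1, eq_inv_of_mul_eq_one_left h1', hjk]
      have hs := hy2 j
      have hs' := hy'2 j
      have hmemi : i ∈ Finset.univ.filter (fun k => T.Adj k j) := by
        simp [hij]
      rw [← Finset.add_sum_erase _ _ hmemi] at hs hs'
      have hsum : ∑ k ∈ (Finset.univ.filter (fun k => T.Adj k j)).erase i, y k j =
          ∑ k ∈ (Finset.univ.filter (fun k => T.Adj k j)).erase i, y' k j := by
        refine Finset.sum_congr rfl fun k hk => ?_
        simp only [Finset.mem_erase, Finset.mem_filter] at hk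
        exact hstep k hk.2.2 hk.1
      have hfin := hs.trans hs'.symm
      rw [hsum] at hfin
      exact add_right_cancel hfin
  intro i j hij
  exact key _ i j hij (Nat.lt_succ_self _)
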